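/- Let L ≥ 1, l ∈ ℕ, and let a, c ∈ {0,1}^{2L}. Then the concatenated string a ++ (1) ++ c^R (the bits of a, followed by a single 1, followed by the reverse of c) lies in Ξ_l^{4L+1} if and only if c ++ (1) ++ a^R lies in Ξ_l^{4L+1}. -/

import Mathlib

/-- The generator `p` of the infinite dihedral group `C₂ * C₂`, realized as the
reflection `sr 0` in `DihedralGroup 0`. -/
def pgen : DihedralGroup 0 := DihedralGroup.sr 0

/-- The generator `q` of the infinite dihedral group `C₂ * C₂`, realized as the
reflection `sr 1` in `DihedralGroup 0`. -/
def qgen : DihedralGroup 0 := DihedralGroup.sr 1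

/-- `g^b` for a bit `b`: `g⁰ = 1`, `g¹ = g`. -/
def bpow (g : DihedralGroup 0) (b : Bool) : DihedralGroup 0 := if b then g else 1

/-- The generator at (0-based) index `i`, i.e. at 1-based position `i+1`:
`q` at odd positions, `p` at even positions. -/
def genAt (i : ℕ) : DihedralGroup 0 := if i % 2 = 0 then qgen else pgen

/-- The word `w(x) = r_n^{x_n} ⋯ r_2^{x_2} r_1^{x_1}` associated with a bit string
`x = x₁…x_n`, where `r_i = q` if `i` is odd and `r_i = p` if `i` is even. -/
def wword {n : ℕ} (x : Fin n → Bool) : DihedralGroup 0 :=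
  ((List.finRange n).reverse.map (fun i => bpow (genAt i.val) (x i))).prod

/-- The reduced word `t(u,k,v) = p^u (qp)^k q^v`. -/
def tword (u : Bool) (k : ℕ) (v : Bool) : DihedralGroup 0 :=
  bpow pgen u * (qgen * pgen) ^ k * bpow qgen v

/-- `Θⁿ_{ukv}` : the set of bit strings `x` of length `n` with `w(x) = p^u (qp)^k q^v`,
empty by convention when `k < 0`. -/
def Theta (n : ℕ) (u : Bool) (k : ℤ) (v : Bool) : Finset (Fin n → Bool) :=
  if k < 0 then ∅ else Finset.univ.filter (fun x => wword x = tword u k.toNat v)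

/-- `Ξ_l^α = Θ^α_{0,l,0} ∪ Θ^α_{1,l,0} ∪ Θ^α_{0,l−1,1} ∪ Θ^α_{1,l−1,1}`. -/
def Xi (α l : ℕ) : Finset (Fin α → Bool) :=
  Theta α false l false ∪ Theta α true l false ∪
    Theta α false ((l : ℤ) - 1) true ∪ Theta α true ((l : ℤ) - 1) true

/-- The concatenated bit string `a ++ (1) ++ cᴿ` of length `4L+1`: the bits of `a`,
followed by a single `1`, followed by the reverse of `c`. -/
def concat3 (L : ℕ) (a c : Fin (2 * L) → Bool) : Fin (4 * L + 1) → Bool :=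
  fun i =>
    if h : (i : ℕ) < 2 * L then a ⟨i, h⟩
    else if h2 : (i : ℕ) = 2 * L then true
    else c ⟨4 * L - (i : ℕ), by have := i.isLt; omega⟩

open DihedralGroup in
lemma sr_inv' (j : ZMod 0) : (DihedralGroup.sr j)⁻¹ = DihedralGroup.sr j := rfl

open DihedralGroup in
lemma r_inv' (j : ZMod 0) : (DihedralGroup.r j)⁻¹ = DihedralGroup.r (-j) := rfl

lemma bpow_genAt_inv (i : ℕ) (b : Bool) : (bpow (genAt i) b)⁻¹ = bpow (genAt i) b := by
  unfold bpow genAt pgen qgen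
  rcases b <;> by_cases h : i % 2 = 0 <;> simp [h, sr_inv']

lemma genAt_parity {i j : ℕ} (h : i % 2 = j % 2) : genAt i = genAt j := by
  unfold genAt; rw [h]

lemma wword_rev {n : ℕ} (hn : n % 2 = 1) (x : Fin n → Bool) :
    wword (fun i => x i.rev) = (wword x)⁻¹ := by
  unfold wword
  rw [List.prod_inv_reverse, ← List.map_reverse, ← List.map_reverse,
    List.reverse_reverse, List.finRange_reverse, List.map_map, List.map_map]
  congr 1
  apply List.map_congr_left
  intro j _
  have hval : (j.rev : ℕ) % 2 = (j : ℕ) % 2 := by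
    have := j.isLt
    rw [Fin.val_rev]
    omega
  simp only [Function.comp_apply, Fin.rev_rev, bpow_genAt_inv, genAt_parity hval]

lemma concat3_rev (L : ℕ) (a c : Fin (2 * L) → Bool) :
    concat3 L c a = fun i => concat3 L a c i.rev := by
  funext i
  have hi := i.isLt
  have hrev : ((i.rev : Fin (4 * L + 1)) : ℕ) = 4 * L - (i : ℕ) := by
    rw [Fin.val_rev]; omega
  unfold concat3
  rcases lt_trichotomy (i : ℕ) (2 * L) with h | h | h
  · rw [dif_pos h, dif_neg (by omega : ¬ ((i.rev : ℕ) < 2 * L)),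
      dif_neg (by omega : ¬ ((i.rev : ℕ) = 2 * L))]
    congr 1
    apply Fin.ext
    simp only
    omega
  · rw [dif_neg (by omega), dif_pos h, dif_neg (by omega),
      dif_pos (by omega : (i.rev : ℕ) = 2 * L)]
  · rw [dif_neg (by omega), dif_neg (by omega),
      dif_pos (by omega : (i.rev : ℕ) < 2 * L)]
    congr 1
    apply Fin.ext
    simp only
    omega

lemma qp_pow (k : ℕ) : (qgen * pgen) ^ k = DihedralGroup.r (-(k : ZMod 0)) := by
  induction k with
  | zero => simp
  | succ m ih =>
    rw [pow_succ, ih]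
    unfold qgen pgen
    simp only [DihedralGroup.sr_mul_sr, DihedralGroup.r_mul_r]
    congr 1
    push_cast
    ring

lemma tword_ff (k : ℕ) : tword false k false = DihedralGroup.r (-(k : ZMod 0)) := by
  unfold tword
  rw [qp_pow]
  simp [bpow]

lemma tword_tf (k : ℕ) : tword true k false = DihedralGroup.sr (-(k : ZMod 0)) := by
  unfold tword
  rw [qp_pow]
  simp [bpow, pgen]

lemma tword_ft (k : ℕ) : tword false k true = DihedralGroup.sr ((k : ZMod 0) + 1) := by
  unfold tword
  rw [qp_pow]
  simp [bpow, qgen]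
  ring_nf

lemma tword_tt (k : ℕ) : tword true k true = DihedralGroup.r ((k : ZMod 0) + 1) := by
  unfold tword
  rw [qp_pow]
  simp [bpow, pgen, qgen]
  ring_nf

lemma xi_inv {α l : ℕ} {x y : Fin α → Bool} (h : wword y = (wword x)⁻¹) :
    x ∈ Xi α l → y ∈ Xi α l := by
  intro hx
  unfold Xi Theta at *
  rcases Nat.eq_zero_or_pos l with rfl | hl
  · simp only [Nat.cast_zero, zero_sub, if_neg (by norm_num : ¬ (0:ℤ) < 0),
      if_pos (by norm_num : (-1:ℤ) < 0), Finset.mem_union, Finset.mem_filter,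
      Finset.mem_univ, true_and, Finset.notMem_empty, or_false] at hx ⊢
    rcases hx with h1 | h1 <;> rw [h, h1]
    · left; rw [tword_ff]; simp [r_inv', tword_ff]
    · right; rw [tword_tf]; simp [sr_inv', tword_tf]
  · have h0 : ¬ ((l : ℤ) < 0) := by omega
    have h1 : ¬ ((l : ℤ) - 1 < 0) := by omega
    have h2 : ((l : ℤ)).toNat = l := by omega
    have h3 : ((l : ℤ) - 1).toNat = l - 1 := by omega
    have hcast : ((l - 1 : ℕ) : ZMod 0) + 1 = (l : ZMod 0) := by
      rw [Nat.cast_sub hl]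
      ring
    simp only [if_neg h0, if_neg h1, h2, h3, Finset.mem_union, Finset.mem_filter,
      Finset.mem_univ, true_and] at hx ⊢
    rcases hx with ((h4 | h4) | h4) | h4 <;> rw [h, h4]
    · right; rw [tword_ff, tword_tt, r_inv', neg_neg, hcast]
    · left; left; right; rw [tword_tf, sr_inv']
    · left; right; rw [tword_ft, sr_inv']
    · left; left; left
      rw [tword_tt, tword_ff, r_inv', hcast]

/-- closure under reversal: `a ++ (1) ++ cᴿ ∈ Ξ_l^{4L+1}` iff
`c ++ (1) ++ aᴿ ∈ Ξ_l^{4L+1}`. -/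
theorem statement16 (L : ℕ) (hL : 1 ≤ L) (l : ℕ) (a c : Fin (2 * L) → Bool) :
    concat3 L a c ∈ Xi (4 * L + 1) l ↔ concat3 L c a ∈ Xi (4 * L + 1) l := by
  have hodd : (4 * L + 1) % 2 = 1 := by omega
  have h1 : wword (concat3 L c a) = (wword (concat3 L a c))⁻¹ := by
    rw [concat3_rev L a c]; exact wword_rev hodd _
  have h2 : wword (concat3 L a c) = (wword (concat3 L c a))⁻¹ := by
    rw [concat3_rev L c a]; exact wword_rev hodd _
  exact ⟨xi_inv h1, xi_inv h2⟩
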